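/- arXiv:1404.5494 — 7 statements merged into one kernel-verified Lean document; each statement's English description precedes it below -/
import Mathlib

section
/- Let X be a nonempty type, let F be a nonempty set of functions X → ℝ closed under scalar multiplication, and let L₀, L₁ : (X → ℝ) → ℝ be nonnegative and absolutely homogeneous on F. Fix ε with 0 < ε < 1 and assume the sandwich (1-ε)·L₀(f) ≤ L₁(f) ≤ (1+ε)·L₀(f) for every f ∈ F. Fix x, y ∈ X and assume the set { |f(x) - f(y)| : f ∈ F, L₀(f) ≤ 1 } is bounded above. Then (1-ε)·ρ_{L₁}(x,y) ≤ ρ_{L₀}(x,y) ≤ (1+ε)·ρ_{L₁}(x,y). -/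
/-- The metric on points associated to a Lip-norm `L` on a set `F` of functions:
`ρ_L(x,y) = sSup { |f x - f y| : f ∈ F, L f ≤ 1 }`. -/
noncomputable def lipNormMetric {X : Type*} (F : Set (X → ℝ)) (L : (X → ℝ) → ℝ)
    (x y : X) : ℝ :=
  sSup {r : ℝ | ∃ f ∈ F, L f ≤ 1 ∧ r = |f x - f y|}

theorem sandwich_of_lipnorms_gives_metric_sandwich
    {X : Type*} [Nonempty X] (F : Set (X → ℝ)) (hFne : F.Nonempty)
    (hFsmul : ∀ f ∈ F, ∀ c : ℝ, c • f ∈ F)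
    (L₀ L₁ : (X → ℝ) → ℝ)
    (hL₀nn : ∀ f ∈ F, 0 ≤ L₀ f)
    (hL₀hom : ∀ f ∈ F, ∀ c : ℝ, L₀ (c • f) = |c| * L₀ f)
    (hL₁nn : ∀ f ∈ F, 0 ≤ L₁ f)
    (hL₁hom : ∀ f ∈ F, ∀ c : ℝ, L₁ (c • f) = |c| * L₁ f)
    (ε : ℝ) (hε0 : 0 < ε) (hε1 : ε < 1)
    (hlow : ∀ f ∈ F, (1 - ε) * L₀ f ≤ L₁ f)
    (hhigh : ∀ f ∈ F, L₁ f ≤ (1 + ε) * L₀ f)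
    (x y : X)
    (hbdd : BddAbove {r : ℝ | ∃ f ∈ F, L₀ f ≤ 1 ∧ r = |f x - f y|}) :
    (1 - ε) * lipNormMetric F L₁ x y ≤ lipNormMetric F L₀ x y ∧
      lipNormMetric F L₀ x y ≤ (1 + ε) * lipNormMetric F L₁ x y := by
  set S₀ := {r : ℝ | ∃ f ∈ F, L₀ f ≤ 1 ∧ r = |f x - f y|} with hS₀
  set S₁ := {r : ℝ | ∃ f ∈ F, L₁ f ≤ 1 ∧ r = |f x - f y|} with hS₁
  have hεpos : (0:ℝ) < 1 - ε := by linarith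
  have hεpos' : (0:ℝ) < 1 + ε := by linarith
  obtain ⟨f₀, hf₀⟩ := hFne
  have hz : ∀ (L : (X → ℝ) → ℝ), (∀ f ∈ F, ∀ c : ℝ, L (c • f) = |c| * L f) →
      (0:ℝ) ∈ {r : ℝ | ∃ f ∈ F, L f ≤ 1 ∧ r = |f x - f y|} := by
    intro L hLhom
    refine ⟨(0:ℝ) • f₀, hFsmul f₀ hf₀ 0, ?_, ?_⟩
    · rw [hLhom f₀ hf₀ 0]; simp
    · simp
  have hS₀ne : S₀.Nonempty := ⟨0, hz L₀ hL₀hom⟩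
  have hS₁ne : S₁.Nonempty := ⟨0, hz L₁ hL₁hom⟩
  have hsup₀nn : 0 ≤ sSup S₀ := le_csSup hbdd (hz L₀ hL₀hom)
  -- every r ∈ S₁ satisfies (1-ε)*r ≤ sSup S₀
  have key₁ : ∀ r ∈ S₁, (1 - ε) * r ≤ sSup S₀ := by
    rintro r ⟨f, hf, hL1f, rfl⟩
    have hg : (1 - ε) • f ∈ F := hFsmul f hf _
    have hgL : L₀ ((1 - ε) • f) ≤ 1 := by
      rw [hL₀hom f hf]
      rw [abs_of_pos hεpos]
      exact le_trans (hlow f hf) hL1f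
    have hmem : (1 - ε) * |f x - f y| ∈ S₀ := by
      refine ⟨(1 - ε) • f, hg, hgL, ?_⟩
      show (1 - ε) * |f x - f y| = |(1 - ε) * f x - (1 - ε) * f y|
      rw [← mul_sub, abs_mul, abs_of_pos hεpos]
    exact le_csSup hbdd hmem
  have hS₁bdd : BddAbove S₁ := by
    refine ⟨sSup S₀ / (1 - ε), ?_⟩
    intro r hr
    rw [le_div_iff₀ hεpos]
    rw [mul_comm]
    exact key₁ r hr
  constructor
  · -- (1-ε) * sSup S₁ ≤ sSup S₀
    show (1 - ε) * sSup S₁ ≤ sSup S₀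
    rw [mul_comm, ← le_div_iff₀ hεpos]
    apply csSup_le hS₁ne
    intro r hr
    rw [le_div_iff₀ hεpos, mul_comm]
    exact key₁ r hr
  · -- sSup S₀ ≤ (1+ε) * sSup S₁
    show sSup S₀ ≤ (1 + ε) * sSup S₁
    apply csSup_le hS₀ne
    rintro r ⟨f, hf, hL0f, rfl⟩
    have hc : |(1 + ε)⁻¹| = (1 + ε)⁻¹ := abs_of_pos (by positivity)
    have hg : (1 + ε)⁻¹ • f ∈ F := hFsmul f hf _
    have hgL : L₁ ((1 + ε)⁻¹ • f) ≤ 1 := by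
      rw [hL₁hom f hf, hc]
      rw [inv_mul_le_iff₀ hεpos', mul_one]
      exact le_trans (hhigh f hf) (by nlinarith)
    have hmem : (1 + ε)⁻¹ * |f x - f y| ∈ S₁ := by
      refine ⟨(1 + ε)⁻¹ • f, hg, hgL, ?_⟩
      have : |(1 + ε)⁻¹ * f x - (1 + ε)⁻¹ * f y| = (1 + ε)⁻¹ * |f x - f y| := by
        rw [← mul_sub, abs_mul, hc]
      simp [this]
    have := le_csSup hS₁bdd hmem
    calc |f x - f y| = (1 + ε) * ((1 + ε)⁻¹ * |f x - f y|) := by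
          field_simp
      _ ≤ (1 + ε) * sSup S₁ := by
          exact mul_le_mul_of_nonneg_left this (le_of_lt hεpos')
end

section
/- (Uniform continuity of a family of Lip-norms implies convergence of the associated metrics.) Let X be a nonempty type, F a nonempty set of functions X → ℝ closed under scalar multiplication, and for each θ ∈ [0,1] let L_θ : (X → ℝ) → ℝ be nonnegative and absolutely homogeneous on F. Assume: (a) for every f ∈ F, L₀(f) = 0 implies f is a constant function; (b) for all x, y ∈ X the set { |f(x) - f(y)| : f ∈ F, L₀(f) ≤ 1 } is bounded above; (c) (uniform continuity) for every ε > 0 there is δ > 0 such that for all θ with 0 < θ < δ and all f ∈ F with L₀(f) = 1 one has |L_θ(f) - L₀(f)| < ε. Then for every ε with 0 < ε < 1 there exists δ > 0 such that for all θ with 0 < θ < δ and all x, y ∈ X one has (1-ε)·ρ_{L_θ}(x,y) ≤ ρ_{L₀}(x,y) ≤ (1+ε)·ρ_{L_θ}(x,y). -/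
theorem uniform_continuity_of_lipnorms_implies_convergence_of_metrics
    {X : Type*} [Nonempty X] (F : Set (X → ℝ)) (hFne : F.Nonempty)
    (hFsmul : ∀ f ∈ F, ∀ c : ℝ, c • f ∈ F)
    (L : ℝ → (X → ℝ) → ℝ)
    (hnn : ∀ θ ∈ Set.Icc (0 : ℝ) 1, ∀ f ∈ F, 0 ≤ L θ f)
    (hhom : ∀ θ ∈ Set.Icc (0 : ℝ) 1, ∀ f ∈ F, ∀ c : ℝ, L θ (c • f) = |c| * L θ f)
    (hconst : ∀ f ∈ F, L 0 f = 0 → ∃ r : ℝ, f = fun _ => r)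
    (hbdd : ∀ x y : X, BddAbove {r : ℝ | ∃ f ∈ F, L 0 f ≤ 1 ∧ r = |f x - f y|})
    (hunif : ∀ ε : ℝ, 0 < ε → ∃ δ : ℝ, 0 < δ ∧
      ∀ θ : ℝ, 0 < θ → θ < δ → ∀ f ∈ F, L 0 f = 1 → |L θ f - L 0 f| < ε) :
    ∀ ε : ℝ, 0 < ε → ε < 1 → ∃ δ : ℝ, 0 < δ ∧
      ∀ θ : ℝ, 0 < θ → θ < δ → ∀ x y : X,
        (1 - ε) * lipNormMetric F (L θ) x y ≤ lipNormMetric F (L 0) x y ∧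
          lipNormMetric F (L 0) x y ≤ (1 + ε) * lipNormMetric F (L θ) x y := by
  intro ε hε hε1
  obtain ⟨δ₀, hδ₀, hδ⟩ := hunif ε hε
  refine ⟨min δ₀ 1, lt_min hδ₀ one_pos, ?_⟩
  intro θ hθ hθδ x y
  unfold lipNormMetric
  have hθ1 : θ ∈ Set.Icc (0:ℝ) 1 :=
    ⟨hθ.le, le_of_lt (lt_of_lt_of_le hθδ (min_le_right _ _))⟩
  have hθδ₀ : θ < δ₀ := lt_of_lt_of_le hθδ (min_le_left _ _)
  have h0I : (0:ℝ) ∈ Set.Icc (0:ℝ) 1 := ⟨le_refl _, zero_le_one⟩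
  obtain ⟨f₀, hf₀⟩ := hFne
  set S0 := {r : ℝ | ∃ f ∈ F, L 0 f ≤ 1 ∧ r = |f x - f y|} with hS0def
  set Sθ := {r : ℝ | ∃ f ∈ F, L θ f ≤ 1 ∧ r = |f x - f y|} with hSθdef
  have h0mem : ∀ θ' ∈ Set.Icc (0:ℝ) 1,
      (0:ℝ) ∈ {r : ℝ | ∃ f ∈ F, L θ' f ≤ 1 ∧ r = |f x - f y|} := by
    intro θ' hθ'
    refine ⟨(0:ℝ) • f₀, hFsmul f₀ hf₀ 0, ?_, ?_⟩
    · rw [hhom θ' hθ' f₀ hf₀ 0]; simp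
    · simp
  have hS0ne : S0.Nonempty := ⟨0, h0mem 0 h0I⟩
  have hSθne : Sθ.Nonempty := ⟨0, h0mem θ hθ1⟩
  have hρ0nonneg : 0 ≤ sSup S0 := le_csSup (hbdd x y) (h0mem 0 h0I)
  have h1ε : (0:ℝ) < 1 - ε := by linarith
  -- key bound for elements of Sθ
  have key : ∀ r ∈ Sθ, (1 - ε) * r ≤ sSup S0 := by
    rintro r ⟨f, hf, hLf, rfl⟩
    rcases eq_or_lt_of_le (hnn 0 h0I f hf) with h0 | h0
    · obtain ⟨c, hc⟩ := hconst f hf h0.symm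
      rw [hc]; simpa using hρ0nonneg
    · set g := (L 0 f)⁻¹ • f with hg
      have hgF : g ∈ F := hFsmul f hf _
      have hLg : L 0 g = 1 := by
        rw [hg, hhom 0 h0I f hf, abs_of_pos (inv_pos.mpr h0), inv_mul_cancel₀ h0.ne']
      have hθg := hδ θ hθ hθδ₀ g hgF hLg
      rw [hLg] at hθg
      have hθg1 : 1 - ε < L θ g := by
        have := (abs_lt.mp hθg).1; linarith
      have hLθg : L θ g = (L 0 f)⁻¹ * L θ f := by
        rw [hg, hhom θ hθ1 f hf, abs_of_pos (inv_pos.mpr h0)]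
      -- (1-ε) * L 0 f ≤ 1
      have hscale : (1 - ε) * L 0 f ≤ 1 := by
        have : L 0 f * L θ g = L θ f := by
          rw [hLθg]; field_simp
        nlinarith
      have habs : |g x - g y| = (L 0 f)⁻¹ * |f x - f y| := by
        have : g x - g y = (L 0 f)⁻¹ * (f x - f y) := by
          simp [hg, Pi.smul_apply, smul_eq_mul, mul_sub]
        rw [this, abs_mul, abs_of_pos (inv_pos.mpr h0)]
      have hmem : |g x - g y| ∈ S0 := ⟨g, hgF, hLg.le, rfl⟩
      have hle : |g x - g y| ≤ sSup S0 := le_csSup (hbdd x y) hmem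
      rw [habs] at hle
      have habsnn : 0 ≤ |f x - f y| := abs_nonneg _
      have h1 : (1 - ε) ≤ (L 0 f)⁻¹ := by
        have hinv : L 0 f * (L 0 f)⁻¹ = 1 := mul_inv_cancel₀ h0.ne'
        nlinarith [inv_pos.mpr h0]
      calc (1 - ε) * |f x - f y| ≤ (L 0 f)⁻¹ * |f x - f y| := by nlinarith
        _ ≤ sSup S0 := hle
  have hSθbdd : BddAbove Sθ := by
    refine ⟨sSup S0 / (1 - ε), ?_⟩
    intro r hr
    rw [le_div_iff₀ h1ε]
    linarith [key r hr]
  have hρθnonneg : 0 ≤ sSup Sθ := le_csSup hSθbdd (h0mem θ hθ1)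
  constructor
  · -- (1-ε) * sSup Sθ ≤ sSup S0
    have : sSup Sθ ≤ sSup S0 / (1 - ε) := by
      apply csSup_le hSθne
      intro r hr
      rw [le_div_iff₀ h1ε]
      linarith [key r hr]
    calc (1 - ε) * sSup Sθ ≤ (1 - ε) * (sSup S0 / (1 - ε)) := by nlinarith
      _ = sSup S0 := by field_simp
  · -- sSup S0 ≤ (1+ε) * sSup Sθ
    apply csSup_le hS0ne
    rintro r ⟨f, hf, hLf, rfl⟩
    rcases eq_or_lt_of_le (hnn 0 h0I f hf) with h0 | h0
    · obtain ⟨c, hc⟩ := hconst f hf h0.symm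
      rw [hc]; simpa using by nlinarith
    · set g := (L 0 f)⁻¹ • f with hg
      have hgF : g ∈ F := hFsmul f hf _
      have hLg : L 0 g = 1 := by
        rw [hg, hhom 0 h0I f hf, abs_of_pos (inv_pos.mpr h0), inv_mul_cancel₀ h0.ne']
      have hθg := hδ θ hθ hθδ₀ g hgF hLg
      rw [hLg] at hθg
      have hθg2 : L θ g < 1 + ε := by
        have := (abs_lt.mp hθg).2; linarith
      have hθgnn : 0 ≤ L θ g := hnn θ hθ1 g hgF
      have hLθg : L θ g = (L 0 f)⁻¹ * L θ f := by
        rw [hg, hhom θ hθ1 f hf, abs_of_pos (inv_pos.mpr h0)]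
      have hLθf : L θ f ≤ 1 + ε := by
        have heq : L 0 f * L θ g = L θ f := by
          rw [hLθg]; field_simp
        nlinarith
      have h1εp : (0:ℝ) < 1 + ε := by linarith
      set h := (1 + ε)⁻¹ • f with hh
      have hhF : h ∈ F := hFsmul f hf _
      have hLh : L θ h ≤ 1 := by
        rw [hh, hhom θ hθ1 f hf, abs_of_pos (inv_pos.mpr h1εp)]
        rw [inv_mul_le_iff₀ h1εp]
        simpa using hLθf
      have habs : |h x - h y| = (1 + ε)⁻¹ * |f x - f y| := by
        have : h x - h y = (1 + ε)⁻¹ * (f x - f y) := by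
          simp [hh, Pi.smul_apply, smul_eq_mul, mul_sub]
        rw [this, abs_mul, abs_of_pos (inv_pos.mpr h1εp)]
      have hmem : |h x - h y| ∈ Sθ := ⟨h, hhF, hLh, rfl⟩
      have hle : |h x - h y| ≤ sSup Sθ := le_csSup hSθbdd hmem
      rw [habs] at hle
      calc |f x - f y| = (1 + ε) * ((1 + ε)⁻¹ * |f x - f y|) := by field_simp
        _ ≤ (1 + ε) * sSup Sθ := by nlinarith
end

section
/- (Equivalence criterion for Lip-norm metrics.) Let X be a nonempty type, F a nonempty set of functions X → ℝ closed under scalar multiplication, and let L₀, L₁ : (X → ℝ) → ℝ be nonnegative and absolutely homogeneous on F. Suppose there is a constant C with 0 ≤ C < 1 such that |L₀(f) - L₁(f)| ≤ C·L₀(f) for all f ∈ F, and suppose for all x, y ∈ X the set { |f(x) - f(y)| : f ∈ F, L₀(f) ≤ 1 } is bounded above. Then the associated metrics are equivalent: for all x, y ∈ X, (1-C)·ρ_{L₁}(x,y) ≤ ρ_{L₀}(x,y) ≤ (1+C)·ρ_{L₁}(x,y). -/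
theorem equivalence_criterion_for_lipnorm_metrics
    {X : Type*} [Nonempty X] (F : Set (X → ℝ)) (hFne : F.Nonempty)
    (hFsmul : ∀ f ∈ F, ∀ c : ℝ, c • f ∈ F)
    (L₀ L₁ : (X → ℝ) → ℝ)
    (hL₀nn : ∀ f ∈ F, 0 ≤ L₀ f)
    (hL₀hom : ∀ f ∈ F, ∀ c : ℝ, L₀ (c • f) = |c| * L₀ f)
    (hL₁nn : ∀ f ∈ F, 0 ≤ L₁ f)
    (hL₁hom : ∀ f ∈ F, ∀ c : ℝ, L₁ (c • f) = |c| * L₁ f)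
    (C : ℝ) (hC0 : 0 ≤ C) (hC1 : C < 1)
    (hest : ∀ f ∈ F, |L₀ f - L₁ f| ≤ C * L₀ f)
    (hbdd : ∀ x y : X, BddAbove {r : ℝ | ∃ f ∈ F, L₀ f ≤ 1 ∧ r = |f x - f y|}) :
    ∀ x y : X,
      (1 - C) * lipNormMetric F L₁ x y ≤ lipNormMetric F L₀ x y ∧
        lipNormMetric F L₀ x y ≤ (1 + C) * lipNormMetric F L₁ x y := by
  intro x y
  obtain ⟨f₀, hf₀⟩ := hFne
  set S₀ := {r : ℝ | ∃ f ∈ F, L₀ f ≤ 1 ∧ r = |f x - f y|} with hS₀def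
  set S₁ := {r : ℝ | ∃ f ∈ F, L₁ f ≤ 1 ∧ r = |f x - f y|} with hS₁def
  have h1C : (0:ℝ) < 1 - C := by linarith
  have h1C' : (0:ℝ) < 1 + C := by linarith
  -- key comparison
  have key : ∀ f ∈ F, (1 - C) * L₀ f ≤ L₁ f ∧ L₁ f ≤ (1 + C) * L₀ f := by
    intro f hf
    have h := abs_le.mp (hest f hf)
    constructor <;> nlinarith [h.1, h.2]
  -- nonemptiness via 0 • f₀
  have hz₀ : (0:ℝ) ∈ S₀ := by
    refine ⟨(0:ℝ) • f₀, hFsmul f₀ hf₀ 0, ?_, ?_⟩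
    · rw [hL₀hom f₀ hf₀ 0]; simp
    · simp
  have hz₁ : (0:ℝ) ∈ S₁ := by
    refine ⟨(0:ℝ) • f₀, hFsmul f₀ hf₀ 0, ?_, ?_⟩
    · rw [hL₁hom f₀ hf₀ 0]; simp
    · simp
  have hρ₀nn : 0 ≤ lipNormMetric F L₀ x y := le_csSup (hbdd x y) hz₀
  -- each element of S₁, scaled by 1-C, lies in S₀
  have hscale : ∀ r ∈ S₁, (1 - C) * r ∈ S₀ := by
    rintro r ⟨f, hf, hLf, rfl⟩
    refine ⟨(1 - C) • f, hFsmul f hf _, ?_, ?_⟩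
    · rw [hL₀hom f hf]
      rw [abs_of_pos h1C]
      have := (key f hf).1
      nlinarith [hL₀nn f hf]
    · simp only [Pi.smul_apply, smul_eq_mul]
      rw [← mul_sub, abs_mul, abs_of_pos h1C]
  have hS₁bdd : BddAbove S₁ := by
    refine ⟨lipNormMetric F L₀ x y / (1 - C), ?_⟩
    intro r hr
    have h := le_csSup (hbdd x y) (hscale r hr)
    rw [le_div_iff₀ h1C]
    exact (mul_comm r (1-C)) ▸ h
  have hS₁le : lipNormMetric F L₁ x y ≤ lipNormMetric F L₀ x y / (1 - C) := by
    apply csSup_le ⟨0, hz₁⟩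
    intro r hr
    have h := le_csSup (hbdd x y) (hscale r hr)
    rw [le_div_iff₀ h1C]
    exact (mul_comm r (1-C)) ▸ h
  constructor
  · -- (1-C) ρ₁ ≤ ρ₀
    have := hS₁le
    rw [le_div_iff₀ h1C] at this
    linarith
  · -- ρ₀ ≤ (1+C) ρ₁
    apply csSup_le ⟨0, hz₀⟩
    rintro r ⟨f, hf, hLf, rfl⟩
    have hmem : (1 + C)⁻¹ * |f x - f y| ∈ S₁ := by
      refine ⟨(1 + C)⁻¹ • f, hFsmul f hf _, ?_, ?_⟩
      · rw [hL₁hom f hf, abs_of_pos (inv_pos.mpr h1C')]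
        have h2 := (key f hf).2
        rw [inv_mul_le_iff₀ h1C']
        nlinarith
      · simp only [Pi.smul_apply, smul_eq_mul]
        rw [← mul_sub, abs_mul, abs_of_pos (inv_pos.mpr h1C')]
    have := le_csSup hS₁bdd hmem
    rw [inv_mul_le_iff₀ h1C'] at this
    exact this.trans_eq rfl
end

section
/- Let K be a field, let L be a Lie algebra over K, let R ∈ ℕ with R ≥ 1, and let V : ℕ → Submodule K L be a family of submodules such that V(0) = ⊥, V(S) = ⊥ for all S > R, the submodules V(1), …, V(R) together span L (their supremum is ⊤), and for all S, T and all x ∈ V(S), y ∈ V(T) one has ⁅x, y⁆ ∈ V(S+T). Then for every M with 1 ≤ M ≤ R and every K-submodule W ≤ V(M), the submodule n := W ⊔ (⨆_{S > M} V(S)) is a Lie ideal of L, and the quotient Lie algebra L ⧸ n is nilpotent. -/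
theorem graded_kernel_is_ideal_with_nilpotent_quotient
    {K : Type*} [Field K] {L : Type*} [LieRing L] [LieAlgebra K L]
    (R : ℕ) (hR : 1 ≤ R) (V : ℕ → Submodule K L)
    (hV0 : V 0 = ⊥)
    (hVhigh : ∀ S : ℕ, R < S → V S = ⊥)
    (hspan : (⨆ S ∈ Set.Icc 1 R, V S) = ⊤)
    (hbracket : ∀ S T : ℕ, ∀ x ∈ V S, ∀ y ∈ V T, ⁅x, y⁆ ∈ V (S + T))
    (M : ℕ) (hM1 : 1 ≤ M) (hMR : M ≤ R)
    (W : Submodule K L) (hW : W ≤ V M) :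
    ∃ I : LieIdeal K L,
      I.toSubmodule = W ⊔ (⨆ S ∈ Set.Ioi M, V S) ∧
        LieRing.IsNilpotent (L ⧸ I) := by
  -- the family of "high degree" submodules
  set N : ℕ → Submodule K L := fun k => ⨆ S ∈ Set.Ioi k, V S with hN
  -- key bracket lemma for an element of V T
  have key : ∀ (T : ℕ) (y : L), y ∈ V T → ∀ (Q : Submodule K L),
      (∀ S, 1 ≤ S → S ≤ R → ∀ x ∈ V S, ⁅x, y⁆ ∈ Q) → ∀ x : L, ⁅x, y⁆ ∈ Q := by
    intro T y hy Q hQ x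
    have hx : x ∈ (⊤ : Submodule K L) := trivial
    rw [← hspan] at hx
    -- the set of x with ⁅x, y⁆ ∈ Q is a submodule: comap of a linear map
    let f : L →ₗ[K] L :=
      { toFun := fun z => ⁅z, y⁆, map_add' := fun a b => add_lie a b y,
        map_smul' := fun c z => smul_lie c z y }
    have hf : ∀ z : L, f z = ⁅z, y⁆ := fun z => rfl
    have : (⨆ S ∈ Set.Icc 1 R, V S) ≤ Q.comap f := by
      refine iSup₂_le fun S hS => ?_
      intro z hz
      simp only [Submodule.mem_comap, hf]
      exact hQ S hS.1 hS.2 z hz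
    have := this hx
    simpa [Submodule.mem_comap, hf] using this
  -- brackets of anything with N k land in N k (in fact in N (k+1))
  have keyN : ∀ (k : ℕ) (x y : L), y ∈ N k → ⁅x, y⁆ ∈ N (k + 1) := by
    intro k x y hy
    -- reduce y to elements of V T, T > k, via comap of ad x
    have : N k ≤ (N (k + 1)).comap (LieAlgebra.ad K L x) := by
      refine iSup₂_le fun T hT => ?_
      intro z hz
      simp only [Submodule.mem_comap, LieAlgebra.ad_apply]
      refine key T z hz _ (fun S hS1 hSR w hw => ?_) x
      have hb := hbracket S T w hw z hz
      have hST : S + T ∈ Set.Ioi (k + 1) := by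
        simp only [Set.mem_Ioi] at hT ⊢
        omega
      exact le_biSup V hST hb
    have := this hy
    simpa [Submodule.mem_comap, LieAlgebra.ad_apply] using this
  have Nmono : ∀ k, N (k + 1) ≤ N k := by
    intro k
    refine iSup₂_le fun T hT => ?_
    have : T ∈ Set.Ioi k := by simp only [Set.mem_Ioi] at hT ⊢; omega
    exact le_biSup V this
  -- the submodule n := W ⊔ N M
  set n : Submodule K L := W ⊔ N M with hn
  have hlie : ∀ (x y : L), y ∈ n → ⁅x, y⁆ ∈ n := by
    intro x y hy
    rw [hn, Submodule.mem_sup] at hy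
    obtain ⟨w, hw, z, hz, rfl⟩ := hy
    rw [lie_add]
    refine Submodule.add_mem _ ?_ ?_
    · -- w ∈ W ⊆ V M
      have hwM : w ∈ V M := hW hw
      refine key M w hwM n (fun S hS1 hSR u hu => ?_) x
      have hb := hbracket S M u hu w hwM
      have hSM : S + M ∈ Set.Ioi M := by simp only [Set.mem_Ioi]; omega
      exact Submodule.mem_sup_right (le_biSup V hSM hb)
    · exact Submodule.mem_sup_right (Nmono M (keyN M x z hz))
  -- the Lie ideal
  let I : LieIdeal K L :=
    { n with lie_mem := fun {x y} hy => hlie x y hy }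
  have hIsub : I.toSubmodule = n := rfl
  refine ⟨I, hIsub, ?_⟩
  -- L is nilpotent: LieModule.lowerCentralSeries K L L k ≤ N k
  have lcs_le : ∀ k : ℕ, (LieModule.lowerCentralSeries K L L k).toSubmodule ≤ N k := by
    intro k
    induction k with
    | zero =>
      intro y _
      have : y ∈ (⊤ : Submodule K L) := trivial
      rw [← hspan] at this
      refine (iSup₂_le fun S hS => ?_ : (⨆ S ∈ Set.Icc 1 R, V S) ≤ N 0) this
      have : S ∈ Set.Ioi 0 := by
        simp only [Set.mem_Icc] at hS; simp only [Set.mem_Ioi]; omega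
      exact le_biSup V this
    | succ k ih =>
      have h1 : LieModule.lowerCentralSeries K L L (k + 1) =
          ⁅(⊤ : LieIdeal K L), LieModule.lowerCentralSeries K L L k⁆ :=
        LieModule.lowerCentralSeries_succ K L L k
      -- build N (k+1) as a Lie submodule
      have hmem : ∀ (x y : L), y ∈ N (k + 1) → ⁅x, y⁆ ∈ N (k + 1) := fun x y hy =>
        Nmono (k + 1) (keyN (k + 1) x y hy)
      let Nk1 : Submodule K L := N (k + 1)
      let NL : LieSubmodule K L L :=
        { Nk1 with lie_mem := fun {x y} hy => hmem x y hy }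
      have h2 : LieModule.lowerCentralSeries K L L (k + 1) ≤ NL := by
        rw [h1, LieSubmodule.lie_le_iff]
        intro x _ m hm
        exact keyN k x m (ih hm)
      intro z hz
      exact h2 hz
    -- done
  haveI hLnil : LieRing.IsNilpotent L := by
    rw [LieRing.IsNilpotent, LieModule.isNilpotent_iff K]
    refine ⟨R, ?_⟩
    have h := lcs_le R
    have hNR : N R = ⊥ := by
      rw [hN]
      refine le_bot_iff.mp (iSup₂_le fun S hS => ?_)
      rw [hVhigh S hS]
    rw [hNR, le_bot_iff] at h
    exact (LieSubmodule.toSubmodule_eq_bot _).mp h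
  -- quotient of nilpotent is nilpotent
  let q0 : L →ₗ[K] L ⧸ I := (LieSubmodule.Quotient.mk' I).toLinearMap
  let q : L →ₗ⁅K⁆ L ⧸ I := { q0 with map_lie' := fun {x y} => rfl }
  have hq : Function.Surjective q := Quot.mk_surjective
  exact hq.lieAlgebra_isNilpotent
end

section
/- Let m ≥ 1, let S be a complex vector space with finrank_ℂ S = 2^m, and let c₁, …, c_{2m} be a Clifford system on S. Set T := Σ_{j=1}^m c_j ∘ c_{m+j}. Then the eigenvalues of T are exactly the numbers μ_l = i·(2l - m) for l = 0, 1, …, m, and for each such l the eigenspace of T for the eigenvalue i·(2l - m) has complex dimension equal to the binomial coefficient (m choose l). -/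
open Finset Module

namespace CliffAux

variable {R : Type*} [CommRing R] [Algebra ℂ R]

noncomputable def eproj (p : R) (z : ℂ) : R := (2:ℂ)⁻¹ • (1 + z • p)

lemma eproj_add_eproj (p : R) (z : ℂ) : eproj p z + eproj p (-z) = 1 := by
  unfold eproj
  rw [← smul_add]
  have h : ((1:R) + z • p) + (1 + (-z) • p) = (2:ℂ) • 1 := by
    match_scalars <;> ring
  rw [h, smul_smul]
  norm_num

lemma eproj_mul_eproj (p : R) (hp : p * p = -1) (z w : ℂ) :
    eproj p z * eproj p w
      = ((2:ℂ)⁻¹ * (2:ℂ)⁻¹ * (1 - z * w)) • (1:R)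
        + ((2:ℂ)⁻¹ * (2:ℂ)⁻¹ * (z + w)) • p := by
  unfold eproj
  rw [smul_mul_smul_comm]
  simp only [mul_add, add_mul, one_mul, mul_one, smul_mul_smul_comm, hp]
  match_scalars <;> ring

lemma eproj_mul_self (p : R) (hp : p * p = -1) (z : ℂ) (hz : z * z = -1) :
    eproj p z * eproj p z = eproj p z := by
  rw [eproj_mul_eproj p hp, hz]
  unfold eproj
  match_scalars <;> ring

lemma eproj_mul_neg (p : R) (hp : p * p = -1) (z : ℂ) (hz : z * z = -1) :
    eproj p z * eproj p (-z) = 0 := by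
  rw [eproj_mul_eproj p hp]
  match_scalars
  · linear_combination ((1:ℂ)/4) * hz
  · ring

lemma p_mul_eproj (p : R) (hp : p * p = -1) (z : ℂ) (hz : z * z = -1) :
    p * eproj p z = (-z) • eproj p z := by
  unfold eproj
  rw [mul_smul_comm, mul_add, mul_one, mul_smul_comm, hp, smul_smul]
  match_scalars
  · linear_combination ((1:ℂ)/2) * hz
  · ring

variable {m : ℕ}

noncomputable def sgn (s : Finset (Fin m)) (j : Fin m) : ℂ :=
  if j ∈ s then -Complex.I else Complex.I

lemma sgn_mul_self (s : Finset (Fin m)) (j : Fin m) : sgn s j * sgn s j = -1 := by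
  by_cases h : j ∈ s <;> simp [sgn, h, Complex.I_mul_I]

noncomputable def Qr (p : Fin m → R) (s : Finset (Fin m)) : R :=
  ∏ j, eproj (p j) (sgn s j)

lemma Qr_eq_split (p : Fin m → R) (t : Finset (Fin m)) :
    Qr p t = (∏ j ∈ t, eproj (p j) (-Complex.I)) *
        ∏ j ∈ univ \ t, eproj (p j) Complex.I := by
  rw [Qr, ← Finset.prod_sdiff (Finset.subset_univ t), mul_comm]
  congr 1
  · exact Finset.prod_congr rfl fun j hj => by simp [sgn, hj]
  · refine Finset.prod_congr rfl fun j hj => ?_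
    rw [Finset.mem_sdiff] at hj
    simp [sgn, hj.2]

lemma sum_Qr (p : Fin m → R) : ∑ s : Finset (Fin m), Qr p s = 1 := by
  have h := Finset.prod_add (fun j : Fin m => eproj (p j) (-Complex.I))
    (fun j => eproj (p j) Complex.I) Finset.univ
  have h2 : ∏ j : Fin m, (eproj (p j) (-Complex.I) + eproj (p j) Complex.I) = 1 := by
    refine Finset.prod_eq_one fun j _ => ?_
    have := eproj_add_eproj (p j) (-Complex.I)
    rwa [neg_neg] at this
  rw [h2] at h
  rw [← Finset.powerset_univ]
  exact (Finset.sum_congr rfl fun t _ => Qr_eq_split p t).trans h.symm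

variable {p : Fin m → R} (hp : ∀ j, p j * p j = -1)
include hp

lemma Qr_mul_self (s : Finset (Fin m)) : Qr p s * Qr p s = Qr p s := by
  rw [Qr, ← Finset.prod_mul_distrib]
  exact Finset.prod_congr rfl fun j _ =>
    eproj_mul_self (p j) (hp j) _ (sgn_mul_self s j)

lemma Qr_mul_ne {s t : Finset (Fin m)} (h : s ≠ t) : Qr p s * Qr p t = 0 := by
  obtain ⟨j, hj⟩ : ∃ j, ¬(j ∈ s ↔ j ∈ t) := by
    by_contra hc
    simp only [not_exists, not_not] at hc
    exact h (Finset.ext hc)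
  rw [Qr, Qr, ← Finset.prod_mul_distrib]
  refine Finset.prod_eq_zero (Finset.mem_univ j) ?_
  have hst : sgn t j = -(sgn s j) := by
    by_cases h1 : j ∈ s <;> by_cases h2 : j ∈ t <;>
      simp [sgn, h1, h2] at hj ⊢
  rw [hst]
  exact eproj_mul_neg (p j) (hp j) _ (sgn_mul_self s j)

lemma p_mul_Qr (j : Fin m) (s : Finset (Fin m)) :
    p j * Qr p s = (-(sgn s j)) • Qr p s := by
  rw [Qr, ← Finset.mul_prod_erase Finset.univ _ (Finset.mem_univ j), ← mul_assoc,
    p_mul_eproj (p j) (hp j) _ (sgn_mul_self s j), smul_mul_assoc]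

lemma sum_p_mul_Qr (s : Finset (Fin m)) :
    (∑ j, p j) * Qr p s
      = (Complex.I * (2 * (s.card : ℂ) - (m : ℂ))) • Qr p s := by
  rw [Finset.sum_mul]
  have h1 : ∀ j : Fin m, p j * Qr p s = (-(sgn s j)) • Qr p s := fun j => p_mul_Qr hp j s
  calc ∑ j, p j * Qr p s = ∑ j, (-(sgn s j)) • Qr p s := by
        exact Finset.sum_congr rfl fun j _ => h1 j
    _ = (∑ j, -(sgn s j)) • Qr p s := by rw [Finset.sum_smul]
    _ = (Complex.I * (2 * (s.card : ℂ) - (m : ℂ))) • Qr p s := by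
        congr 1
        have h2 : ∀ j : Fin m, -(sgn s j)
            = (if j ∈ s then (2*Complex.I) else 0) + (-Complex.I) := by
          intro j; by_cases h : j ∈ s <;> simp [sgn, h] <;> ring
        rw [Finset.sum_congr rfl fun j _ => h2 j, Finset.sum_add_distrib,
          Finset.sum_ite_mem, Finset.univ_inter, Finset.sum_const, Finset.sum_const,
          Finset.card_univ, Fintype.card_fin, nsmul_eq_mul, nsmul_eq_mul]
        push_cast
        ring
variable {S : Type*} [AddCommGroup S] [Module ℂ S]

omit hp in
lemma conj_smul_one_add (P u : Module.End ℂ S) (z : ℂ) (h : u * P = -(P * u)) :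
    u * ((2:ℂ)⁻¹ • (1 + z • P)) = ((2:ℂ)⁻¹ • (1 + (-z) • P)) * u := by
  rw [mul_smul_comm, smul_mul_assoc, mul_add, add_mul, mul_one, one_mul,
    mul_smul_comm, smul_mul_assoc, h]
  module

omit hp in
lemma comm_smul_one_add (P u : Module.End ℂ S) (z : ℂ) (h : u * P = P * u) :
    u * ((2:ℂ)⁻¹ • (1 + z • P)) = ((2:ℂ)⁻¹ • (1 + z • P)) * u := by
  rw [mul_smul_comm, smul_mul_assoc, mul_add, add_mul, mul_one, one_mul,
    mul_smul_comm, smul_mul_assoc, h]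

omit hp in
lemma map_eproj (φ : R →ₐ[ℂ] Module.End ℂ S) (q : R) (z : ℂ) :
    φ (eproj q z) = (2:ℂ)⁻¹ • (1 + z • φ q) := by
  simp [eproj, map_smul, map_add, map_one]

/-- flip the membership of `k` -/
def flip (k : Fin m) (s : Finset (Fin m)) : Finset (Fin m) :=
  if k ∈ s then s.erase k else insert k s

omit hp in
lemma sgn_flip (k : Fin m) (s : Finset (Fin m)) (j : Fin m) :
    sgn (flip k s) j = if j = k then -(sgn s j) else sgn s j := by
  unfold flip sgn
  by_cases hj : j = k <;> by_cases hk : k ∈ s <;> by_cases hjs : j ∈ s <;>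
    subst_eqs <;> simp_all [Finset.mem_erase, Finset.mem_insert]

omit hp in
lemma conj_Qr (φ : R →ₐ[ℂ] Module.End ℂ S) (p : Fin m → R) (k : Fin m)
    (u : Module.End ℂ S)
    (huk : u * φ (p k) = -(φ (p k) * u))
    (huj : ∀ j, j ≠ k → u * φ (p j) = φ (p j) * u)
    (s : Finset (Fin m)) :
    u * φ (Qr p s) = φ (Qr p (flip k s)) * u := by
  have main : ∀ u' : Finset (Fin m),
      u * φ (∏ j ∈ u', eproj (p j) (sgn s j))
        = φ (∏ j ∈ u', eproj (p j) (sgn (flip k s) j)) * u := by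
    intro u'
    induction u' using Finset.induction with
    | empty => simp
    | @insert a u' ha ih =>
      rw [Finset.prod_insert ha, Finset.prod_insert ha, map_mul, map_mul,
        ← mul_assoc]
      have hstep : u * φ (eproj (p a) (sgn s a))
          = φ (eproj (p a) (sgn (flip k s) a)) * u := by
        rw [map_eproj, map_eproj, sgn_flip]
        by_cases hak : a = k
        · rw [if_pos hak, hak]
          exact conj_smul_one_add _ _ _ huk
        · rw [if_neg hak]
          exact comm_smul_one_add _ _ _ (huj a hak)
      rw [hstep, mul_assoc, ih, ← mul_assoc]
  exact main Finset.univ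

omit hp in
lemma finrank_range_conj [FiniteDimensional ℂ S] (Q1 Q2 u v : Module.End ℂ S)
    (huv : u * v = 1) (hvu : v * u = 1) (h : u * Q1 = Q2 * u) :
    Module.finrank ℂ (LinearMap.range Q2) = Module.finrank ℂ (LinearMap.range Q1) := by
  have hQ2 : Q2 = u * (Q1 * v) := by
    calc Q2 = Q2 * (u * v) := by rw [huv, mul_one]
      _ = (u * Q1) * v := by rw [← mul_assoc, ← h]
      _ = u * (Q1 * v) := by rw [mul_assoc]
  have h1 : u ∘ₗ v = LinearMap.id := by rw [← Module.End.mul_eq_comp, huv, Module.End.one_eq_id]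
  have h2 : v ∘ₗ u = LinearMap.id := by rw [← Module.End.mul_eq_comp, hvu, Module.End.one_eq_id]
  let e : S ≃ₗ[ℂ] S := LinearEquiv.ofLinear u v h1 h2
  have hv : LinearMap.range v = ⊤ := by
    rw [LinearMap.range_eq_top]
    intro x
    exact ⟨u x, by rw [← Module.End.mul_apply, hvu, Module.End.one_apply]⟩
  have h3 : LinearMap.range (Q1 * v) = LinearMap.range Q1 := by
    rw [Module.End.mul_eq_comp, LinearMap.range_comp, hv, Submodule.map_top]
  rw [hQ2, Module.End.mul_eq_comp, LinearMap.range_comp, h3]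
  exact LinearEquiv.finrank_map_eq e _

omit [CommRing R] [Algebra ℂ R] hp in
noncomputable def equivPi {σ : Type*} [Fintype σ] [DecidableEq σ] (Q : σ → Module.End ℂ S)
    (hsum : ∑ s, Q s = 1) (horth : ∀ s t : σ, s ≠ t → Q s * Q t = 0)
    (hidem : ∀ s, Q s * Q s = Q s)
    (pred : σ → Prop) [DecidablePred pred] (V : Submodule ℂ S)
    (hV1 : ∀ v ∈ V, ∀ s, ¬ pred s → Q s v = 0)
    (hV2 : ∀ s, pred s → ∀ x : S, Q s x ∈ V) :
    V ≃ₗ[ℂ] (∀ s : {s // pred s}, LinearMap.range (Q s.1)) := by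
  have hle : ∀ s : {s // pred s}, LinearMap.range (Q s.1) ≤ V := by
    rintro s _ ⟨x, rfl⟩
    exact hV2 s.1 s.2 x
  refine LinearEquiv.ofLinear
    (LinearMap.pi (fun s => (Q s.1).rangeRestrict ∘ₗ V.subtype))
    (∑ s : {s // pred s}, (Submodule.inclusion (hle s)) ∘ₗ LinearMap.proj s)
    (LinearMap.ext fun w => funext fun s => Subtype.ext ?_)
    (LinearMap.ext fun x => Subtype.ext ?_)
  · -- F (G w) s = w s
    simp only [LinearMap.comp_apply, LinearMap.pi_apply, LinearMap.sum_apply,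
      LinearMap.id_apply, LinearMap.codRestrict_apply, Submodule.coe_subtype,
      Submodule.coe_sum, LinearMap.proj_apply]
    rw [map_sum]
    have hterm : ∀ t : {s // pred s},
        Q s.1 ((Submodule.inclusion (hle t) (w t) : V) : S)
          = if t = s then ((w s : S)) else 0 := by
      intro t
      obtain ⟨x, hx⟩ := (w t).2
      have hco : ((Submodule.inclusion (hle t) (w t) : V) : S) = ((w t : S)) := rfl
      rw [hco, ← hx, ← Module.End.mul_apply]
      by_cases hts : t = s
      · subst hts
        rw [hidem, hx]
        simp
      · rw [horth s.1 t.1 (fun hc => hts (Subtype.ext hc.symm))]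
        simp [hts]
    rw [Finset.sum_congr rfl (fun t _ => hterm t)]
    simp
  · -- G (F x) = x
    have key : ∑ s : {s // pred s}, Q s.1 (x : S) = (x : S) := by
      have h0 : ∑ s ∈ Finset.univ.filter pred, Q s (x : S) = (x : S) := by
        have htot : ∑ s : σ, Q s (x : S) = (x : S) := by
          have := congrArg (fun f : Module.End ℂ S => f (x : S)) hsum
          simpa [LinearMap.sum_apply] using this
        rw [← Finset.sum_filter_add_sum_filter_not Finset.univ pred
          (fun s => Q s (x : S))] at htot
        rw [Finset.sum_eq_zero (s := Finset.univ.filter (fun s => ¬ pred s)) (fun s hs => by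
          simp only [Finset.mem_filter] at hs
          exact hV1 (x : S) x.2 s hs.2), add_zero] at htot
        exact htot
      exact ((Finset.sum_subtype (p := pred) (Finset.univ.filter pred) (by simp)
        (fun s => Q s (x : S))).symm).trans h0
    simp only [LinearMap.comp_apply, LinearMap.sum_apply, LinearMap.id_apply,
      Submodule.coe_sum, LinearMap.proj_apply, LinearMap.pi_apply]
    simpa using key
end CliffAux

open CliffAux Module

set_option synthInstance.maxHeartbeats 1600000
set_option maxHeartbeats 3200000

theorem clifford_sum_eigenvalues_and_multiplicities
    {S : Type*} [AddCommGroup S] [Module ℂ S] [FiniteDimensional ℂ S]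
    (m : ℕ) (hm : 1 ≤ m) (hdim : Module.finrank ℂ S = 2 ^ m)
    (c : ℕ → Module.End ℂ S)
    (hsq : ∀ j < 2 * m, c j * c j = -1)
    (hanti : ∀ j < 2 * m, ∀ k < 2 * m, j ≠ k → c j * c k + c k * c j = 0) :
    (∀ μ : ℂ, (∑ j ∈ Finset.range m, c j * c (m + j)).HasEigenvalue μ ↔
        ∃ l : ℕ, l ≤ m ∧ μ = Complex.I * (2 * (l : ℂ) - (m : ℂ))) ∧
    ∀ l : ℕ, l ≤ m →
      Module.finrank ℂ
          ((∑ j ∈ Finset.range m, c j * c (m + j)).eigenspace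
            (Complex.I * (2 * (l : ℂ) - (m : ℂ)))) = m.choose l := by
  classical
  set T : Module.End ℂ S := ∑ j ∈ Finset.range m, c j * c (m + j) with hTdef
  have hsw : ∀ a b : ℕ, a < 2*m → b < 2*m → a ≠ b → c a * c b = -(c b * c a) :=
    fun a b ha hb hab => eq_neg_of_add_eq_zero_left (hanti a ha b hb hab)
  have comm_of_anti : ∀ x a b : Module.End ℂ S, x * a = -(a*x) → x * b = -(b*x) →
      x*(a*b) = (a*b)*x := by
    intro x a b h1 h2
    calc x*(a*b) = (x*a)*b := by rw [mul_assoc]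
      _ = -(a*(x*b)) := by rw [h1, neg_mul, mul_assoc]
      _ = -(a*(-(b*x))) := by rw [h2]
      _ = (a*b)*x := by rw [mul_neg, neg_neg, mul_assoc]
  set P : Fin m → Module.End ℂ S := fun j => c j * c (m + j) with hPdef
  have hP2 : ∀ j : Fin m, P j * P j = -1 := by
    intro j
    have hj : (j:ℕ) < 2*m := by omega
    have hmj : m + (j:ℕ) < 2*m := by omega
    have h1 : c (m+(j:ℕ)) * c j = -(c j * c (m+(j:ℕ))) := hsw _ _ hmj hj (by omega)
    show (c j * c (m+(j:ℕ))) * (c j * c (m+(j:ℕ))) = -1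
    calc (c j * c (m+(j:ℕ))) * (c j * c (m+(j:ℕ)))
        = c j * ((c (m+(j:ℕ)) * c j) * c (m+(j:ℕ))) := by simp only [mul_assoc]
      _ = c j * (-(c j * c (m+(j:ℕ))) * c (m+(j:ℕ))) := by rw [h1]
      _ = -(c j * c j * (c (m+(j:ℕ)) * c (m+(j:ℕ)))) := by
          simp only [neg_mul, mul_neg, mul_assoc]
      _ = -1 := by rw [hsq _ hmj, mul_neg_one, neg_neg, hsq _ hj]
  have hccP : ∀ a : ℕ, a < 2*m → ∀ j : Fin m, a ≠ (j:ℕ) → a ≠ m + (j:ℕ) →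
      c a * P j = P j * c a := by
    intro a ha j h1 h2
    exact comm_of_anti _ _ _ (hsw a j ha (by omega) h1) (hsw a (m+(j:ℕ)) ha (by omega) h2)
  have hPcomm : ∀ j k : Fin m, P j * P k = P k * P j := by
    intro j k
    by_cases hjk : j = k
    · rw [hjk]
    · have hvne : (j:ℕ) ≠ (k:ℕ) := fun h => hjk (Fin.ext h)
      have h1 : c (k:ℕ) * P j = P j * c (k:ℕ) :=
        hccP k (by omega) j (fun h => hvne h.symm) (by omega)
      have h2 : c (m+(k:ℕ)) * P j = P j * c (m+(k:ℕ)) :=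
        hccP (m+(k:ℕ)) (by omega) j (by omega) (by omega)
      have hgen : ∀ x a b : Module.End ℂ S, a*x = x*a → b*x = x*b →
          x*(a*b) = (a*b)*x := by
        intro x a b g1 g2
        calc x*(a*b) = (x*a)*b := (mul_assoc x a b).symm
          _ = (a*x)*b := by rw [g1]
          _ = a*(x*b) := mul_assoc a x b
          _ = a*(b*x) := by rw [g2]
          _ = (a*b)*x := (mul_assoc a b x).symm
      exact hgen (P j) (c (k:ℕ)) (c (m+(k:ℕ))) h1 h2
  -- the commutative subalgebra generated by the P j
  letI : CommRing (Algebra.adjoin ℂ (Set.range P)) :=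
    Algebra.adjoinCommRingOfComm ℂ (by rintro _ ⟨j, rfl⟩ _ ⟨k, rfl⟩; exact hPcomm j k)
  set p : Fin m → (Algebra.adjoin ℂ (Set.range P)) :=
    fun j => ⟨P j, Algebra.subset_adjoin ⟨j, rfl⟩⟩ with hpdef
  have hp : ∀ j, p j * p j = -1 := by
    intro j
    apply Subtype.coe_injective
    simpa using hP2 j
  set φ : (Algebra.adjoin ℂ (Set.range P)) →ₐ[ℂ] Module.End ℂ S :=
    Subalgebra.val _ with hφdef
  set Qe : Finset (Fin m) → Module.End ℂ S := fun s => φ (Qr p s) with hQedef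
  have hQsum : ∑ s : Finset (Fin m), Qe s = 1 := by
    rw [hQedef]
    rw [← map_sum φ _ Finset.univ, sum_Qr, map_one]
  have hQorth : ∀ s t : Finset (Fin m), s ≠ t → Qe s * Qe t = 0 := by
    intro s t hst
    rw [hQedef]
    rw [← map_mul, Qr_mul_ne hp hst, map_zero]
  have hQidem : ∀ s, Qe s * Qe s = Qe s := by
    intro s
    rw [hQedef, ← map_mul, Qr_mul_self hp]
  have hT : T = φ (∑ j, p j) := by
    rw [map_sum]
    have h1 : ∀ j : Fin m, φ (p j) = P j := fun j => rfl
    rw [Finset.sum_congr rfl fun j _ => h1 j, hTdef, hPdef]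
    exact (Fin.sum_univ_eq_sum_range (fun j => c j * c (m + j)) m).symm
  let μf : Finset (Fin m) → ℂ := fun s => Complex.I * (2*(s.card:ℂ) - (m:ℂ))
  have hTQ : ∀ s, T * Qe s = μf s • Qe s := by
    intro s
    rw [hT, hQedef, ← map_mul, sum_p_mul_Qr hp s, map_smul]
  have hQT : ∀ s, Qe s * T = μf s • Qe s := by
    intro s
    rw [hT, hQedef, ← map_mul, mul_comm (Qr p s), sum_p_mul_Qr hp s, map_smul]
  -- ranks
  have hrank_flip : ∀ (k : Fin m) (s : Finset (Fin m)),
      Module.finrank ℂ (LinearMap.range (Qe (flip k s)))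
        = Module.finrank ℂ (LinearMap.range (Qe s)) := by
    intro k s
    have hk2 : (k:ℕ) < 2*m := by omega
    have huv : c (k:ℕ) * (-(c (k:ℕ))) = 1 := by rw [mul_neg, hsq _ hk2, neg_neg]
    have hvu : (-(c (k:ℕ))) * c (k:ℕ) = 1 := by rw [neg_mul, hsq _ hk2, neg_neg]
    have huk : c (k:ℕ) * φ (p k) = -(φ (p k) * c (k:ℕ)) := by
      have h1 : c (m+(k:ℕ)) * c (k:ℕ) = -(c (k:ℕ) * c (m+(k:ℕ))) :=
        hsw _ _ (by omega) hk2 (by omega)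
      have h2 : φ (p k) * c (k:ℕ) = -(c (k:ℕ) * φ (p k)) := by
        show (c (k:ℕ) * c (m+(k:ℕ))) * c (k:ℕ) = -(c (k:ℕ) * (c (k:ℕ) * c (m+(k:ℕ))))
        calc (c (k:ℕ) * c (m+(k:ℕ))) * c (k:ℕ) = c (k:ℕ) * (c (m+(k:ℕ)) * c (k:ℕ)) := by
              rw [mul_assoc]
          _ = -(c (k:ℕ) * (c (k:ℕ) * c (m+(k:ℕ)))) := by rw [h1, mul_neg]
      rw [h2, neg_neg]
    have huj : ∀ j, j ≠ k → c (k:ℕ) * φ (p j) = φ (p j) * c (k:ℕ) := by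
      intro j hjk
      exact hccP k hk2 j (fun h => hjk (Fin.ext h.symm)) (by omega)
    have hconj := conj_Qr φ p k (c (k:ℕ)) huk huj s
    exact finrank_range_conj (Qe s) (Qe (flip k s)) (c (k:ℕ)) (-(c (k:ℕ))) huv hvu hconj
  have hrank_all : ∀ s : Finset (Fin m),
      Module.finrank ℂ (LinearMap.range (Qe s))
        = Module.finrank ℂ (LinearMap.range (Qe (∅ : Finset (Fin m)))) := by
    intro s
    induction s using Finset.induction with
    | empty => rfl
    | @insert a s ha ih =>
      have hfl : flip a s = insert a s := by unfold CliffAux.flip; rw [if_neg ha]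
      rw [← hfl, hrank_flip a s, ih]
  have hfin : ∀ s : Finset (Fin m), Module.finrank ℂ (LinearMap.range (Qe s)) = 1 := by
    have e1 := equivPi Qe hQsum hQorth hQidem (fun _ => True) ⊤
      (fun v _ s hs => absurd trivial hs) (fun s _ x => Submodule.mem_top)
    have e2 : Module.finrank ℂ (⊤ : Submodule ℂ S)
        = ∑ s : {s : Finset (Fin m) // True}, Module.finrank ℂ (LinearMap.range (Qe s.1)) := by
      rw [e1.finrank_eq, Module.finrank_pi_fintype]
    rw [finrank_top, hdim] at e2
    have e3 : ∑ s : {s : Finset (Fin m) // True}, Module.finrank ℂ (LinearMap.range (Qe s.1))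
        = (2^m) * Module.finrank ℂ (LinearMap.range (Qe (∅ : Finset (Fin m)))) := by
      rw [Finset.sum_congr rfl (fun s _ => hrank_all s.1), Finset.sum_const,
        smul_eq_mul, Finset.card_univ]
      congr 1
      rw [Fintype.card_congr (Equiv.subtypeUnivEquiv (fun _ => trivial)),
        Fintype.card_finset, Fintype.card_fin]
    have e4 := e2.trans e3
    have hr : Module.finrank ℂ (LinearMap.range (Qe (∅ : Finset (Fin m)))) = 1 := by
      have h2m : 0 < (2:ℕ)^m := Nat.pow_pos (by norm_num)
      exact (Nat.eq_of_mul_eq_mul_left h2m (by rw [mul_one, ← e4])).symm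
    intro s
    rw [hrank_all s, hr]
  have hQvanish : ∀ (μ : ℂ) (v : S), T v = μ • v → ∀ s, μf s ≠ μ → Qe s v = 0 := by
    intro μ v hv s hne
    have h1 : Qe s (T v) = μf s • Qe s v := by
      rw [← Module.End.mul_apply, hQT s, LinearMap.smul_apply]
    have h2 : Qe s (T v) = μ • Qe s v := by rw [hv, map_smul]
    have h3 : (μf s - μ) • Qe s v = 0 := by rw [sub_smul, ← h1, ← h2, sub_self]
    rcases smul_eq_zero.mp h3 with h | h
    · exact absurd (sub_eq_zero.mp h) hne
    · exact h
  have hdim_eig : ∀ l : ℕ, l ≤ m →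
      Module.finrank ℂ (T.eigenspace (Complex.I * (2*(l:ℂ) - (m:ℂ)))) = m.choose l := by
    intro l hl
    set μ := Complex.I * (2*(l:ℂ) - (m:ℂ)) with hμdef
    have hiff : ∀ s : Finset (Fin m), μf s = μ ↔ s.card = l := by
      intro s
      constructor
      · intro h
        have h1 := mul_left_cancel₀ Complex.I_ne_zero h
        have h2 : ((s.card:ℂ)) = (l:ℂ) := by linear_combination h1/2
        exact_mod_cast h2
      · intro h
        simp only [μf, h, hμdef]
    have e1 := equivPi Qe hQsum hQorth hQidem (fun s => μf s = μ) (T.eigenspace μ)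
      (fun v hv s hs => hQvanish μ v (Module.End.mem_eigenspace_iff.mp hv) s hs)
      (fun s hs x => Module.End.mem_eigenspace_iff.mpr
        (by rw [← Module.End.mul_apply, hTQ s, LinearMap.smul_apply, hs]))
    rw [e1.finrank_eq, Module.finrank_pi_fintype,
      Finset.sum_congr rfl (fun s _ => hfin s.1), Finset.sum_const,
      smul_eq_mul, mul_one, Finset.card_univ,
      Fintype.card_congr (Equiv.subtypeEquivRight hiff),
      Fintype.card_finset_len, Fintype.card_fin]
  refine ⟨?_, hdim_eig⟩
  intro μ
  constructor
  · intro hμ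
    obtain ⟨v, hv⟩ := hμ.exists_hasEigenvector
    have hTv : T v = μ • v := hv.apply_eq_smul
    have hex : ∃ s : Finset (Fin m), Qe s v ≠ 0 := by
      by_contra hc
      push_neg at hc
      have htot : ∑ s : Finset (Fin m), Qe s v = v := by
        have := congrArg (fun f : Module.End ℂ S => f v) hQsum
        simpa [LinearMap.sum_apply] using this
      rw [Finset.sum_eq_zero (fun s _ => hc s)] at htot
      exact hv.2 htot.symm
    obtain ⟨s, hs⟩ := hex
    have hμs : μf s = μ := by
      by_contra hne
      exact hs (hQvanish μ v hTv s hne)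
    refine ⟨s.card, ?_, ?_⟩
    · calc s.card ≤ Finset.univ.card := Finset.card_le_univ s
        _ = m := by rw [Finset.card_univ, Fintype.card_fin]
    · exact hμs.symm
  · rintro ⟨l, hl, rfl⟩
    rw [Module.End.hasEigenvalue_iff]
    intro hbot
    have h0 := hdim_eig l hl
    rw [hbot, finrank_bot] at h0
    exact absurd h0.symm (Nat.choose_pos hl).ne'
end

section
/- Let m ≥ 1, let S be a nonzero finite-dimensional complex vector space, let c₁, …, c_{2m} be a Clifford system on S, and let λ₁, …, λ_m be positive real numbers. Set T := Σ_{j=1}^m λ_j · (c_j ∘ c_{m+j}). Then every eigenvalue μ of T is purely imaginary with |Im μ| ≤ Σ_{j=1}^m λ_j, and both of the numbers i·Σ_{j=1}^m λ_j and -i·Σ_{j=1}^m λ_j are eigenvalues of T. -/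
open Module Finset

section AuxSplit

variable {S : Type*} [AddCommGroup S] [Module ℂ S]

private lemma aux_split (A : Module.End ℂ S) (hA : A * A = -1) (w : S) :
    ∃ wp wm : S, wp + wm = w ∧ A wp = Complex.I • wp ∧ A wm = (-Complex.I) • wm ∧
      ∀ (B : Module.End ℂ S) (μ : ℂ), B * A = A * B → B w = μ • w →
        B wp = μ • wp ∧ B wm = μ • wm := by
  have hAA : ∀ x : S, A (A x) = -x := fun x => by
    have := congrArg (fun f : Module.End ℂ S => f x) hA
    simpa [Module.End.mul_apply] using this
  refine ⟨(2⁻¹ : ℂ) • (w - Complex.I • A w), (2⁻¹ : ℂ) • (w + Complex.I • A w),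
    ?_, ?_, ?_, ?_⟩
  · module
  · rw [map_smul, map_sub, map_smul, hAA]
    match_scalars
    all_goals ring_nf
    all_goals norm_num [Complex.I_sq]
  · rw [map_smul, map_add, map_smul, hAA]
    match_scalars
    all_goals ring_nf
    all_goals norm_num [Complex.I_sq]
  · intro B μ hBA hBw
    have hBAx : B (A w) = μ • A w := by
      have := congrArg (fun f : Module.End ℂ S => f w) hBA
      simp only [Module.End.mul_apply] at this
      rw [this, hBw, map_smul]
    constructor
    · rw [map_smul, map_sub, map_smul, hBw, hBAx]
      module
    · rw [map_smul, map_add, map_smul, hBw, hBAx]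
      module

end AuxSplit

theorem weighted_clifford_sum_eigenvalues
    {S : Type*} [AddCommGroup S] [Module ℂ S] [FiniteDimensional ℂ S] [Nontrivial S]
    (m : ℕ) (hm : 1 ≤ m) (c : ℕ → Module.End ℂ S)
    (hsq : ∀ j < 2 * m, c j * c j = -1)
    (hanti : ∀ j < 2 * m, ∀ k < 2 * m, j ≠ k → c j * c k + c k * c j = 0)
    (lam : ℕ → ℝ) (hlam : ∀ j < m, 0 < lam j) :
    (∀ μ : ℂ,
        (∑ j ∈ Finset.range m, (lam j : ℂ) • (c j * c (m + j))).HasEigenvalue μ →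
          μ.re = 0 ∧ |μ.im| ≤ ∑ j ∈ Finset.range m, lam j) ∧
    (∑ j ∈ Finset.range m, (lam j : ℂ) • (c j * c (m + j))).HasEigenvalue
        (Complex.I * ((∑ j ∈ Finset.range m, lam j : ℝ) : ℂ)) ∧
    (∑ j ∈ Finset.range m, (lam j : ℂ) • (c j * c (m + j))).HasEigenvalue
        (-(Complex.I * ((∑ j ∈ Finset.range m, lam j : ℝ) : ℂ))) := by
  classical
  set T : Module.End ℂ S := ∑ j ∈ Finset.range m, (lam j : ℂ) • (c j * c (m + j)) with hTdef
  have hswap : ∀ a, a < 2*m → ∀ b, b < 2*m → a ≠ b → c a * c b = -(c b * c a) := by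
    intro a ha b hb hab
    exact eq_neg_of_add_eq_zero_left (hanti a ha b hb hab)
  have hL1 : ∀ a b d, a < 2*m → b < 2*m → d < 2*m → a ≠ b → a ≠ d →
      c a * (c b * c d) = (c b * c d) * c a := by
    intro a b d ha hb hd hab had
    rw [← mul_assoc, hswap a ha b hb hab, neg_mul, mul_assoc, hswap a ha d hd had,
      mul_neg, neg_neg, ← mul_assoc]
  have hTsq : ∀ k, k < m → (c k * c (m+k)) * (c k * c (m+k)) = -1 := by
    intro k hk
    have h1 : c (m+k) * c k = -(c k * c (m+k)) :=
      hswap (m+k) (by omega) k (by omega) (by omega)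
    have h2 := hsq k (by omega)
    have h3 := hsq (m+k) (by omega)
    calc (c k * c (m+k)) * (c k * c (m+k))
        = c k * ((c (m+k) * c k) * c (m+k)) := by
          rw [mul_assoc, ← mul_assoc (c (m+k))]
      _ = c k * (-(c k * c (m+k)) * c (m+k)) := by rw [h1]
      _ = -((c k * c k) * (c (m+k) * c (m+k))) := by
          rw [neg_mul, mul_neg, mul_assoc (c k) (c (m+k)), ← mul_assoc (c k) (c k)]
      _ = -1 := by rw [h2, h3]; simp
  have hTT : ∀ j k, j < m → k < m → j ≠ k →
      (c j * c (m+j)) * (c k * c (m+k)) = (c k * c (m+k)) * (c j * c (m+j)) := by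
    intro j k hj hk hjk
    have h1 : c k * (c j * c (m+j)) = (c j * c (m+j)) * c k :=
      hL1 k j (m+j) (by omega) (by omega) (by omega) (by omega) (by omega)
    have h2 : c (m+k) * (c j * c (m+j)) = (c j * c (m+j)) * c (m+k) :=
      hL1 (m+k) j (m+j) (by omega) (by omega) (by omega) (by omega) (by omega)
    rw [← mul_assoc, ← h1, mul_assoc, ← h2, ← mul_assoc]
  have hTk_ck : ∀ k, k < m →
      (c k * c (m+k)) * c k = -(c k * (c k * c (m+k))) := by
    intro k hk
    rw [mul_assoc, hswap (m+k) (by omega) k (by omega) (by omega), mul_neg]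
  have hTcomm : ∀ k, k < m → T * (c k * c (m+k)) = (c k * c (m+k)) * T := by
    intro k hk
    rw [hTdef, Finset.sum_mul, Finset.mul_sum]
    refine Finset.sum_congr rfl fun j hj => ?_
    rw [smul_mul_assoc, mul_smul_comm]
    by_cases h : j = k
    · subst h; rfl
    · rw [hTT j k (Finset.mem_range.mp hj) hk h]
  have key : ∀ s : Finset ℕ, s ⊆ Finset.range m → ∀ μ : ℂ, ∀ v : S, v ≠ 0 → T v = μ • v →
      ∃ w : S, w ≠ 0 ∧ T w = μ • w ∧
        ∀ j ∈ s, (c j * c (m+j)) w = Complex.I • w ∨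
          (c j * c (m+j)) w = (-Complex.I) • w := by
    intro s
    induction s using Finset.induction_on with
    | empty =>
      intro _ μ v hv hTv
      exact ⟨v, hv, hTv, by simp⟩
    | @insert k s hks ih =>
      intro hsub μ v hv hTv
      have hkm : k < m := by
        simpa using hsub (Finset.mem_insert_self k s)
      obtain ⟨w, hw0, hTw, hjs⟩ :=
        ih (fun x hx => hsub (Finset.mem_insert_of_mem hx)) μ v hv hTv
      obtain ⟨wp, wm, hsum, hAp, hAm, hB⟩ := aux_split (c k * c (m+k)) (hTsq k hkm) w
      have hTfact := hB T μ (hTcomm k hkm) hTw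
      have hjfact : ∀ j ∈ s,
          ((c j * c (m+j)) wp = Complex.I • wp ∨ (c j * c (m+j)) wp = (-Complex.I) • wp) ∧
          ((c j * c (m+j)) wm = Complex.I • wm ∨ (c j * c (m+j)) wm = (-Complex.I) • wm) := by
        intro j hj
        have hjm : j < m := by simpa using hsub (Finset.mem_insert_of_mem hj)
        have hcomm : (c j * c (m+j)) * (c k * c (m+k)) =
            (c k * c (m+k)) * (c j * c (m+j)) :=
          hTT j k hjm hkm (fun h => hks (h ▸ hj))
        rcases hjs j hj with h | h
        · have := hB (c j * c (m+j)) Complex.I hcomm h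
          exact ⟨Or.inl this.1, Or.inl this.2⟩
        · have := hB (c j * c (m+j)) (-Complex.I) hcomm h
          exact ⟨Or.inr this.1, Or.inr this.2⟩
      by_cases hwp : wp = 0
      · have hwm : wm ≠ 0 := by
          intro h0
          exact hw0 (by rw [← hsum, hwp, h0, add_zero])
        refine ⟨wm, hwm, hTfact.2, ?_⟩
        intro j hj
        rcases Finset.mem_insert.mp hj with h | h
        · subst h; exact Or.inr hAm
        · rcases hjfact j h with ⟨_, h2⟩; exact h2
      · refine ⟨wp, hwp, hTfact.1, ?_⟩
        intro j hj
        rcases Finset.mem_insert.mp hj with h | h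
        · subst h; exact Or.inl hAp
        · rcases hjfact j h with ⟨h1, _⟩; exact h1
  have hcinj : ∀ k, k < 2*m → ∀ x : S, c k x = 0 → x = 0 := by
    intro k hk x hx
    have := congrArg (fun f : Module.End ℂ S => f x) (hsq k hk)
    simp only [Module.End.mul_apply] at this
    rw [hx, map_zero] at this
    simpa using this.symm
  have hflipk : ∀ k, k < m → ∀ (w : S) (ε : ℕ → ℂ),
      (∀ j, j < m → (c j * c (m+j)) w = (ε j * Complex.I) • w) →
      ∀ j, j < m → (c j * c (m+j)) (c k w) =
        ((if j = k then -ε j else ε j) * Complex.I) • (c k w) := by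
    intro k hkm w ε hw j hj
    have hw' := hw j hj
    simp only [Module.End.mul_apply] at hw'
    by_cases hjk : j = k
    · subst hjk
      simp only [if_pos rfl, Module.End.mul_apply]
      have h := congrArg (fun f : Module.End ℂ S => f w) (hTk_ck j hj)
      simp only [Module.End.mul_apply, LinearMap.neg_apply] at h
      rw [h, hw', map_smul]
      simp [neg_mul]
    · simp only [if_neg hjk, Module.End.mul_apply]
      have hop : c k * (c j * c (m+j)) = (c j * c (m+j)) * c k :=
        hL1 k j (m+j) (by omega) (by omega) (by omega) (fun h => hjk h.symm) (by omega)
      have h := congrArg (fun f : Module.End ℂ S => f w) hop.symm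
      simp only [Module.End.mul_apply] at h
      rw [h, hw', map_smul]
  have hflipset : ∀ s : Finset ℕ, s ⊆ Finset.range m → ∀ (w : S), w ≠ 0 → ∀ (ε : ℕ → ℂ),
      (∀ j, j < m → (c j * c (m+j)) w = (ε j * Complex.I) • w) →
      ∃ w', w' ≠ 0 ∧ ∀ j, j < m →
        (c j * c (m+j)) w' = ((if j ∈ s then -ε j else ε j) * Complex.I) • w' := by
    intro s
    induction s using Finset.induction_on with
    | empty =>
      intro _ w hw ε hε
      exact ⟨w, hw, by simpa using hε⟩
    | @insert k s hks ih =>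
      intro hsub w hw ε hε
      have hkm : k < m := by simpa using hsub (Finset.mem_insert_self k s)
      obtain ⟨w', hw', hε'⟩ := ih (fun x hx => hsub (Finset.mem_insert_of_mem hx)) w hw ε hε
      refine ⟨c k w', fun h0 => hw' (hcinj k (by omega) w' h0), ?_⟩
      intro j hj
      have hres := hflipk k hkm w' (fun j => if j ∈ s then -ε j else ε j) hε' j hj
      have hsc : (if j = k then -(if j ∈ s then -ε j else ε j)
          else (if j ∈ s then -ε j else ε j)) = (if j ∈ insert k s then -ε j else ε j) := by
        by_cases h1 : j = k
        · subst h1; simp [hks]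
        · by_cases h2 : j ∈ s <;> simp [h1, h2]
      rw [hres, hsc]
  -- main eigenvalue computation helper
  have hTapply : ∀ w : S, T w = ∑ j ∈ Finset.range m, (lam j : ℂ) • ((c j * c (m+j)) w) := by
    intro w
    rw [hTdef]
    simp [LinearMap.sum_apply, LinearMap.smul_apply]
  have hmk : ∀ (σ : ℂ) (u : S), u ≠ 0 →
      (∀ j, j < m → (c j * c (m+j)) u = (σ * Complex.I) • u) →
      T.HasEigenvalue (Complex.I * σ * ((∑ j ∈ Finset.range m, lam j : ℝ) : ℂ)) := by
    intro σ u hu h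
    apply Module.End.hasEigenvalue_of_hasEigenvector (x := u)
    refine ⟨Module.End.mem_eigenspace_iff.mpr ?_, hu⟩
    rw [hTapply u]
    have hterm : ∀ j ∈ Finset.range m, (lam j : ℂ) • ((c j * c (m+j)) u) =
        ((lam j : ℂ) * (σ * Complex.I)) • u := fun j hj => by
      rw [h j (Finset.mem_range.mp hj), smul_smul]
    rw [Finset.sum_congr rfl hterm, ← Finset.sum_smul]
    congr 1
    rw [← Finset.sum_mul]
    push_cast
    ring
  have hexist : T.HasEigenvalue (Complex.I * ((∑ j ∈ Finset.range m, lam j : ℝ) : ℂ)) ∧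
      T.HasEigenvalue (-(Complex.I * ((∑ j ∈ Finset.range m, lam j : ℝ) : ℂ))) := by
    obtain ⟨μ₀, hμ₀⟩ := Module.End.exists_eigenvalue T
    obtain ⟨v, hv⟩ := hμ₀.exists_hasEigenvector
    obtain ⟨w, hw0, hTw, hjs⟩ :=
      key (Finset.range m) (subset_refl _) μ₀ v hv.2 hv.apply_eq_smul
    have hch : ∀ j, ∃ e : ℂ, j < m →
        ((e = 1 ∨ e = -1) ∧ (c j * c (m+j)) w = (e * Complex.I) • w) := by
      intro j
      by_cases hj : j < m
      · rcases hjs j (Finset.mem_range.mpr hj) with h | h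
        · exact ⟨1, fun _ => ⟨Or.inl rfl, by rw [h]; norm_num⟩⟩
        · exact ⟨-1, fun _ => ⟨Or.inr rfl, by rw [h]; norm_num⟩⟩
      · exact ⟨1, fun h => absurd h hj⟩
    choose ε hε using hch
    constructor
    · obtain ⟨wp, hwp0, hwp⟩ := hflipset ((Finset.range m).filter (fun j => ε j = -1))
        (Finset.filter_subset _ _) w hw0 ε (fun j hj => (hε j hj).2)
      have h1 : ∀ j, j < m → (c j * c (m+j)) wp = ((1:ℂ) * Complex.I) • wp := by
        intro j hj
        have hjj := hwp j hj
        rcases (hε j hj).1 with h | h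
        · have hnot : j ∉ (Finset.range m).filter (fun j => ε j = -1) := by
            intro hmem
            have := (Finset.mem_filter.mp hmem).2
            rw [h] at this
            norm_num at this
          rwa [if_neg hnot, h] at hjj
        · have hmem : j ∈ (Finset.range m).filter (fun j => ε j = -1) :=
            Finset.mem_filter.mpr ⟨Finset.mem_range.mpr hj, h⟩
          rwa [if_pos hmem, h, neg_neg] at hjj
      have := hmk 1 wp hwp0 h1
      simpa using this
    · obtain ⟨wm, hwm0, hwm⟩ := hflipset ((Finset.range m).filter (fun j => ε j = 1))
        (Finset.filter_subset _ _) w hw0 ε (fun j hj => (hε j hj).2)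
      have h1 : ∀ j, j < m → (c j * c (m+j)) wm = ((-1:ℂ) * Complex.I) • wm := by
        intro j hj
        have hjj := hwm j hj
        rcases (hε j hj).1 with h | h
        · have hmem : j ∈ (Finset.range m).filter (fun j => ε j = 1) :=
            Finset.mem_filter.mpr ⟨Finset.mem_range.mpr hj, h⟩
          rwa [if_pos hmem, h] at hjj
        · have hnot : j ∉ (Finset.range m).filter (fun j => ε j = 1) := by
            intro hmem
            have := (Finset.mem_filter.mp hmem).2
            rw [h] at this
            norm_num at this
          rwa [if_neg hnot, h] at hjj
      have := hmk (-1) wm hwm0 h1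
      have heq : Complex.I * (-1) * ((∑ j ∈ Finset.range m, lam j : ℝ) : ℂ) =
          -(Complex.I * ((∑ j ∈ Finset.range m, lam j : ℝ) : ℂ)) := by ring
      rwa [heq] at this
  refine ⟨?_, hexist.1, hexist.2⟩
  · intro μ hμ
    obtain ⟨v, hv⟩ := hμ.exists_hasEigenvector
    obtain ⟨w, hw0, hTw, hjs⟩ := key (Finset.range m) (subset_refl _) μ v hv.2 hv.apply_eq_smul
    have hch : ∀ j, ∃ e : ℝ, j < m →
        ((e = 1 ∨ e = -1) ∧ (c j * c (m+j)) w = (((e : ℝ) : ℂ) * Complex.I) • w) := by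
      intro j
      by_cases hj : j < m
      · rcases hjs j (Finset.mem_range.mpr hj) with h | h
        · exact ⟨1, fun _ => ⟨Or.inl rfl, by rw [h]; norm_num⟩⟩
        · exact ⟨-1, fun _ => ⟨Or.inr rfl, by rw [h]; norm_num⟩⟩
      · exact ⟨1, fun h => absurd h hj⟩
    choose ε hε using hch
    have hTw2 : T w = (Complex.I * ((∑ j ∈ Finset.range m, lam j * ε j : ℝ) : ℂ)) • w := by
      rw [hTapply w]
      have : ∀ j ∈ Finset.range m, (lam j : ℂ) • ((c j * c (m+j)) w) =
          ((lam j : ℂ) * (((ε j : ℝ) : ℂ) * Complex.I)) • w := by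
        intro j hj
        rw [(hε j (Finset.mem_range.mp hj)).2, smul_smul]
      rw [Finset.sum_congr rfl this, ← Finset.sum_smul]
      congr 1
      push_cast
      rw [Finset.mul_sum]
      exact Finset.sum_congr rfl fun j hj => by ring
    have hμ_eq : μ = Complex.I * ((∑ j ∈ Finset.range m, lam j * ε j : ℝ) : ℂ) := by
      have h0 : (μ - Complex.I * ((∑ j ∈ Finset.range m, lam j * ε j : ℝ) : ℂ)) • w = 0 := by
        rw [sub_smul, ← hTw, hTw2, sub_self]
      rcases smul_eq_zero.mp h0 with h | h
      · exact sub_eq_zero.mp h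
      · exact absurd h hw0
    constructor
    · rw [hμ_eq]; simp [Complex.mul_re]
    · rw [hμ_eq]
      have him : (Complex.I * ((∑ j ∈ Finset.range m, lam j * ε j : ℝ) : ℂ)).im =
          ∑ j ∈ Finset.range m, lam j * ε j := by simp [Complex.mul_im]
      rw [him]
      calc |∑ j ∈ Finset.range m, lam j * ε j|
          ≤ ∑ j ∈ Finset.range m, |lam j * ε j| := Finset.abs_sum_le_sum_abs _ _
        _ = ∑ j ∈ Finset.range m, lam j := by
            refine Finset.sum_congr rfl fun j hj => ?_
            have hl := hlam j (Finset.mem_range.mp hj)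
            rcases (hε j (Finset.mem_range.mp hj)).1 with h | h <;>
              rw [h] <;> simp [abs_of_pos hl]
end

section
/- Let m be a natural number with m ≥ 1 and let p be a real number. Then the family over pairs of positive natural numbers (τ, k) ∈ ℕ⁺ × ℕ⁺ given by (τ, k) ↦ τ^m · (τ^(1/2) · k^(1/(2m)))^(-p) (real powers of positive reals) is summable if and only if p > 2m + 2. -/
lemma pnat_rpow_summable_iff (r : ℝ) :
    Summable (fun n : ℕ+ => ((n : ℕ) : ℝ) ^ r) ↔ r < -1 := by
  rcases eq_or_ne r 0 with hr | hr
  · subst hr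
    simp only [Real.rpow_zero]
    rw [summable_const_iff]
    norm_num
  · have hinj : Function.Injective ((↑) : ℕ+ → ℕ) := PNat.coe_injective
    have hrange : ∀ x ∉ Set.range ((↑) : ℕ+ → ℕ),
        ((x : ℝ) : ℝ) ^ r = 0 := by
      intro x hx
      have hx0 : x = 0 := by
        by_contra h
        exact hx ⟨⟨x, Nat.pos_of_ne_zero h⟩, rfl⟩
      subst hx0
      simp [Real.zero_rpow hr]
    have := hinj.summable_iff (f := fun n : ℕ => (n : ℝ) ^ r) hrange
    rw [show (fun n : ℕ+ => ((n : ℕ) : ℝ) ^ r) =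
        (fun n : ℕ => (n : ℝ) ^ r) ∘ ((↑) : ℕ+ → ℕ) from rfl, this,
      Real.summable_nat_rpow]

theorem heisenberg_eigenvalue_series_summable_iff
    (m : ℕ) (hm : 1 ≤ m) (p : ℝ) :
    Summable (fun z : ℕ+ × ℕ+ =>
        (z.1 : ℝ) ^ m *
          (((z.1 : ℝ) ^ ((1 : ℝ) / 2) * (z.2 : ℝ) ^ ((1 : ℝ) / (2 * (m : ℝ)))) ^ (-p))) ↔
      p > 2 * (m : ℝ) + 2 := by
  have hm0 : (0 : ℝ) < m := by exact_mod_cast hm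
  set a : ℝ := (m : ℝ) - p / 2 with ha
  set b : ℝ := -(p / (2 * (m : ℝ))) with hb
  have key : (fun z : ℕ+ × ℕ+ =>
        (z.1 : ℝ) ^ m *
          (((z.1 : ℝ) ^ ((1 : ℝ) / 2) * (z.2 : ℝ) ^ ((1 : ℝ) / (2 * (m : ℝ)))) ^ (-p)))
      = fun z : ℕ+ × ℕ+ => ((z.1 : ℕ) : ℝ) ^ a * ((z.2 : ℕ) : ℝ) ^ b := by
    funext z
    have h1 : (0 : ℝ) < ((z.1 : ℕ) : ℝ) := by exact_mod_cast z.1.pos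
    have h2 : (0 : ℝ) < ((z.2 : ℕ) : ℝ) := by exact_mod_cast z.2.pos
    rw [Real.mul_rpow (Real.rpow_nonneg h1.le _) (Real.rpow_nonneg h2.le _),
      ← Real.rpow_natCast ((z.1 : ℕ) : ℝ) m,
      ← Real.rpow_mul h1.le, ← Real.rpow_mul h2.le, ← mul_assoc,
      ← Real.rpow_add h1]
    congr 1
    · congr 1; ring
    · congr 1; rw [hb]; field_simp
  rw [key]
  constructor
  · intro h
    have hτ : Summable (fun τ : ℕ+ => ((τ : ℕ) : ℝ) ^ a * ((1 : ℝ)) ^ b) := by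
      have hinj : Function.Injective (fun τ : ℕ+ => (τ, (1 : ℕ+))) := by
        intro x y hxy; exact (Prod.mk.injEq _ _ _ _ ▸ hxy).1
      have := h.comp_injective hinj
      simpa [Function.comp_def] using this
    simp only [Real.one_rpow, mul_one] at hτ
    have hk : Summable (fun k : ℕ+ => ((1 : ℝ)) ^ a * ((k : ℕ) : ℝ) ^ b) := by
      have hinj : Function.Injective (fun k : ℕ+ => ((1 : ℕ+), k)) := by
        intro x y hxy; exact (Prod.mk.injEq _ _ _ _ ▸ hxy).2
      have := h.comp_injective hinj
      simpa [Function.comp_def] using this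
    simp only [Real.one_rpow, one_mul] at hk
    have ha' : a < -1 := (pnat_rpow_summable_iff a).mp hτ
    rw [ha] at ha'
    linarith
  · intro hp
    have ha' : a < -1 := by rw [ha]; linarith
    have hb' : b < -1 := by
      rw [hb, neg_lt, neg_neg, lt_div_iff₀ (by linarith : (0:ℝ) < 2 * m)]
      linarith
    have hf := (pnat_rpow_summable_iff a).mpr ha'
    have hg := (pnat_rpow_summable_iff b).mpr hb'
    apply Summable.mul_of_nonneg hf hg
    · exact fun τ => Real.rpow_nonneg (by positivity) _
    · exact fun k => Real.rpow_nonneg (by positivity) _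
end
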